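/- Let H be a closed subspace of a complex Hilbert space K. Let T_1, T_2, V_3 be pairwise commuting bounded operators on H with ‖T_1‖ ≤ 1, ‖T_2‖ ≤ 1 and V_3 an isometry of H. Let V_1, V_2 be commuting isometries on K such that P_H V_1^{m_1} V_2^{m_2}|_H = T_1^{m_1} T_2^{m_2} for all m_1, m_2 ∈ ℕ∪{0}. Define W : K → K by W x = V_3 (P_H x) + (x − P_H x) (so W acts as V_3 on H and as the identity on H^⊥). Then W is an isometry on K and P_H V_1^{m_1} V_2^{m_2} W^{m_3}|_H = T_1^{m_1} T_2^{m_2} V_3^{m_3} for all m_1, m_2, m_3 ∈ ℕ∪{0}; that is, (V_1, V_2, W) is an isometric dilation of (T_1, T_2, V_3). -/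

import Mathlib

open ContinuousLinearMap

/-- Let `T₁, T₂, V₃` be pairwise commuting operators on a closed subspace `H ⊆ K` with `T₁, T₂`
contractions and `V₃` an isometry, and let `(V₁, V₂)` be a commuting isometric dilation of
`(T₁, T₂)` on `K`. Define `W x = V₃(P_H x) + (x − P_H x)`. Then `W` is an isometry and
`(V₁, V₂, W)` is an isometric dilation of `(T₁, T₂, V₃)`. -/
theorem stmt_5 {K : Type*} [NormedAddCommGroup K] [InnerProductSpace ℂ K] [CompleteSpace K]
    (Hs : Submodule ℂ K) [CompleteSpace Hs]
    (T₁ T₂ V₃ : Hs →L[ℂ] Hs)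
    (h12 : T₁ * T₂ = T₂ * T₁) (h13 : T₁ * V₃ = V₃ * T₁) (h23 : T₂ * V₃ = V₃ * T₂)
    (hT₁ : ‖T₁‖ ≤ 1) (hT₂ : ‖T₂‖ ≤ 1) (hV₃ : ∀ x : Hs, ‖V₃ x‖ = ‖x‖)
    (V₁ V₂ : K →L[ℂ] K)
    (hV₁ : ∀ x : K, ‖V₁ x‖ = ‖x‖) (hV₂ : ∀ x : K, ‖V₂ x‖ = ‖x‖)
    (hVcomm : V₁ * V₂ = V₂ * V₁)
    (hdil : ∀ (m₁ m₂ : ℕ) (h : Hs),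
      Hs.orthogonalProjectionOnto ((V₁ ^ m₁) ((V₂ ^ m₂) (h : K))) = (T₁ ^ m₁) ((T₂ ^ m₂) h))
    (W : K →L[ℂ] K)
    (hW : ∀ x : K, W x = (V₃ (Hs.orthogonalProjectionOnto x) : K) +
      (x - (Hs.orthogonalProjectionOnto x : K))) :
    (∀ x : K, ‖W x‖ = ‖x‖) ∧
    ∀ (m₁ m₂ m₃ : ℕ) (h : Hs),
      Hs.orthogonalProjectionOnto ((V₁ ^ m₁) ((V₂ ^ m₂) ((W ^ m₃) (h : K)))) =
        (T₁ ^ m₁) ((T₂ ^ m₂) ((V₃ ^ m₃) h)) := by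
  have key : ∀ (m₃ : ℕ) (h : Hs), (W ^ m₃) (h : K) = ((V₃ ^ m₃) h : K) := by
    intro m₃
    induction m₃ with
    | zero => intro h; simp
    | succ n ih =>
      intro h
      rw [pow_succ, pow_succ]
      simp only [mul_apply_eq_comp]
      rw [hW]
      simp only [Submodule.orthogonalProjectionOnto_mem_subspace_eq_self, sub_self, add_zero]
      exact ih (V₃ h)
  constructor
  · intro x
    have hmem : (x - (Hs.orthogonalProjectionOnto x : K)) ∈ Hsᗮ :=
      Submodule.sub_starProjection_mem_orthogonal (K := Hs) x
    have hinner : (inner ℂ ((V₃ (Hs.orthogonalProjectionOnto x) : K))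
        (x - (Hs.orthogonalProjectionOnto x : K)) : ℂ) = 0 :=
      Submodule.inner_right_of_mem_orthogonal (V₃ (Hs.orthogonalProjectionOnto x)).2 hmem
    have hinner' : (inner ℂ ((Hs.orthogonalProjectionOnto x : K))
        (x - (Hs.orthogonalProjectionOnto x : K)) : ℂ) = 0 :=
      Submodule.inner_right_of_mem_orthogonal (Hs.orthogonalProjectionOnto x).2 hmem
    have h1 : ‖W x‖ ^ 2 = ‖(V₃ (Hs.orthogonalProjectionOnto x) : K)‖ ^ 2 +
        ‖x - (Hs.orthogonalProjectionOnto x : K)‖ ^ 2 := by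
      rw [hW]
      simpa [pow_two] using norm_add_sq_eq_norm_sq_add_norm_sq_of_inner_eq_zero _ _ hinner
    have h2 : ‖x‖ ^ 2 = ‖((Hs.orthogonalProjectionOnto x : K))‖ ^ 2 +
        ‖x - (Hs.orthogonalProjectionOnto x : K)‖ ^ 2 := by
      nth_rewrite 1 [show x = (Hs.orthogonalProjectionOnto x : K) +
        (x - (Hs.orthogonalProjectionOnto x : K)) by abel]
      simpa [pow_two] using norm_add_sq_eq_norm_sq_add_norm_sq_of_inner_eq_zero _ _ hinner'
    have h3 : ‖(V₃ (Hs.orthogonalProjectionOnto x) : K)‖ = ‖((Hs.orthogonalProjectionOnto x : K))‖ := by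
      rw [show ‖(V₃ (Hs.orthogonalProjectionOnto x) : K)‖ = ‖V₃ (Hs.orthogonalProjectionOnto x)‖ from rfl,
        hV₃]
      rfl
    have hsq : ‖W x‖ ^ 2 = ‖x‖ ^ 2 := by rw [h1, h2, h3]
    nlinarith [norm_nonneg (W x), norm_nonneg x]
  · intro m₁ m₂ m₃ h
    rw [key m₃ h]
    exact hdil m₁ m₂ _
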